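/- Let G be a group with finite generating set S and Cayley graph Γ. Let g ∈ G and s ∈ S ∪ S⁻¹ with |sg| = |g| + 1, and let h be a vertex of C(sg) and k ∈ G with k not a vertex of C(sg) and {h,k} an edge of Γ. Then {h,k} is a tangent edge (i.e. an edge of the extended cone C̄(sg)) if and only if exactly one of the following holds: (Case 1) {h,k} is a tangent edge of C̄(g) with k not a vertex of C(g); or (Case 2) {hg⁻¹, kg⁻¹} is a tangent edge of C̄(s) with kg⁻¹ not a vertex of C(s), but k is a vertex of C(g). -/

import Mathlib

variable {G : Type*} [Group G]

noncomputable def wordLength (S : Set G) (g : G) : ℕ :=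
  sInf {n | ∃ w : List G, (∀ x ∈ w, x ∈ S ∪ S⁻¹) ∧ w.length = n ∧ w.prod = g}

def cayley (S : Set G) : SimpleGraph G where
  Adj g h := g ≠ h ∧ h * g⁻¹ ∈ S ∪ S⁻¹
  symm := ⟨by
    rintro g h ⟨hne, hmem⟩
    refine ⟨hne.symm, ?_⟩
    have key : g * h⁻¹ = (h * g⁻¹)⁻¹ := by group
    rw [key]
    rcases hmem with h1 | h1
    · exact Or.inr (by simpa [Set.mem_inv] using h1)
    · exact Or.inl (by simpa [Set.mem_inv] using h1)⟩
  loopless := ⟨fun g h => h.1 rfl⟩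

def coneSet (S : Set G) (g : G) : Set G :=
  {h | wordLength S h = wordLength S g + (cayley S).dist g h}

lemma self_mem_coneSet (S : Set G) (g : G) : g ∈ coneSet S g := by
  simp [coneSet]

/-- The cone `C(g)` as a subgraph of the Cayley graph. -/
def coneSubgraph (S : Set G) (g : G) : (cayley S).Subgraph where
  verts := coneSet S g
  Adj a b := a ∈ coneSet S g ∧ b ∈ coneSet S g ∧ (cayley S).Adj a b
  adj_sub h := h.2.2
  edge_vert h := h.1
  symm := ⟨by rintro a b ⟨ha, hb, hab⟩; exact ⟨hb, ha, hab.symm⟩⟩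

/-- The extended cone `C̄(g)` as a subgraph of the Cayley graph: the cone together with,
for each vertex `h` of the cone and each tangent edge `{h,k}` of the Cayley graph,
the vertex `k` and the edge `{h,k}`. -/
def extConeSubgraph (S : Set G) (g : G) : (cayley S).Subgraph where
  verts := coneSet S g ∪
    {k | ∃ h ∈ coneSet S g, (cayley S).Adj h k ∧ wordLength S h = wordLength S k}
  Adj a b := (cayley S).Adj a b ∧
    ((a ∈ coneSet S g ∧ b ∈ coneSet S g) ∨
      (wordLength S a = wordLength S b ∧ (a ∈ coneSet S g ∨ b ∈ coneSet S g)))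
  adj_sub h := h.1
  edge_vert := by
    rintro a b ⟨hadj, hc | ⟨ht, hc⟩⟩
    · exact Or.inl hc.1
    · rcases hc with hc | hc
      · exact Or.inl hc
      · exact Or.inr ⟨b, hc, hadj.symm, ht.symm⟩
  symm := ⟨by
    rintro a b ⟨hadj, hc | ⟨ht, hc⟩⟩
    · exact ⟨hadj.symm, Or.inl ⟨hc.2, hc.1⟩⟩
    · exact ⟨hadj.symm, Or.inr ⟨ht.symm, hc.symm⟩⟩⟩

lemma self_mem_extCone (S : Set G) (g : G) : g ∈ (extConeSubgraph S g).verts :=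
  Set.mem_union_left _ (self_mem_coneSet S g)

lemma exists_word (S : Set G) (hgen : Subgroup.closure S = ⊤) (g : G) :
    ∃ w : List G, (∀ x ∈ w, x ∈ S ∪ S⁻¹) ∧ w.prod = g := by
  have hg : g ∈ Submonoid.closure (S ∪ S⁻¹) := by
    rw [← Subgroup.closure_toSubmonoid, hgen]; trivial
  exact Submonoid.exists_list_of_mem_closure hg

lemma wordLength_spec (S : Set G) (hgen : Subgroup.closure S = ⊤) (g : G) :
    ∃ w : List G, (∀ x ∈ w, x ∈ S ∪ S⁻¹) ∧ w.length = wordLength S g ∧ w.prod = g := by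
  obtain ⟨w, hw, hp⟩ := exists_word S hgen g
  have : wordLength S g ∈ {n | ∃ w : List G, (∀ x ∈ w, x ∈ S ∪ S⁻¹) ∧ w.length = n ∧ w.prod = g} :=
    Nat.sInf_mem ⟨w.length, w, hw, rfl, hp⟩
  exact this

lemma wordLength_le (S : Set G) {g : G} {w : List G} (hw : ∀ x ∈ w, x ∈ S ∪ S⁻¹)
    (hp : w.prod = g) : wordLength S g ≤ w.length :=
  Nat.sInf_le ⟨w, hw, rfl, hp⟩

lemma wordLength_one (S : Set G) : wordLength S 1 = 0 :=
  Nat.le_zero.mp (wordLength_le S (w := []) (by simp) (by simp))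

lemma wordLength_mul_le (S : Set G) (hgen : Subgroup.closure S = ⊤) (a b : G) :
    wordLength S (a * b) ≤ wordLength S a + wordLength S b := by
  obtain ⟨wa, hwa, hla, hpa⟩ := wordLength_spec S hgen a
  obtain ⟨wb, hwb, hlb, hpb⟩ := wordLength_spec S hgen b
  have := wordLength_le S (w := wa ++ wb) (by
    intro x hx; rcases List.mem_append.mp hx with h | h
    exacts [hwa x h, hwb x h]) (by rw [List.prod_append, hpa, hpb])
  simpa [hla, hlb] using this

lemma walk_of_word (S : Set G) (w : List G) (hw : ∀ x ∈ w, x ∈ S ∪ S⁻¹) :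
    ∀ g h : G, h = w.prod * g → ∃ p : (cayley S).Walk g h, p.length ≤ w.length := by
  induction w with
  | nil => intro g h hh; simp at hh; subst hh; exact ⟨SimpleGraph.Walk.nil, by simp⟩
  | cons x t ih =>
    intro g h hh
    obtain ⟨p, hp⟩ := ih (fun y hy => hw y (List.mem_cons_of_mem _ hy)) g (t.prod * g) rfl
    by_cases hx : x = 1
    · have : h = t.prod * g := by rw [hh, List.prod_cons, hx, one_mul]
      subst this
      exact ⟨p, le_trans hp (by simp)⟩
    · have hadj : (cayley S).Adj (t.prod * g) h := by
        show _ ≠ _ ∧ _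
        constructor
        · intro he
          apply hx
          have : h * (t.prod * g)⁻¹ = x := by rw [hh, List.prod_cons]; group
          rw [← this, he, mul_inv_cancel]
        · have : h * (t.prod * g)⁻¹ = x := by rw [hh, List.prod_cons]; group
          rw [this]; exact hw x List.mem_cons_self
      exact ⟨p.concat hadj, by rw [SimpleGraph.Walk.length_concat]; simpa using hp⟩

lemma word_of_walk (S : Set G) : ∀ {g h : G} (p : (cayley S).Walk g h),
    ∃ w : List G, (∀ x ∈ w, x ∈ S ∪ S⁻¹) ∧ w.length = p.length ∧ w.prod = h * g⁻¹ := by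
  intro g h p
  induction p with
  | nil => exact ⟨[], by simp, by simp, by simp⟩
  | @cons u v h' hadj p ih =>
    obtain ⟨w, hw, hlen, hprod⟩ := ih
    refine ⟨w ++ [v * u⁻¹], ?_, ?_, ?_⟩
    · intro x hx
      rcases List.mem_append.mp hx with hx | hx
      · exact hw x hx
      · simp at hx; subst hx; exact (show u ≠ v ∧ v * u⁻¹ ∈ S ∪ S⁻¹ from hadj).2
    · simp [hlen]
    · rw [List.prod_append, hprod, List.prod_singleton]; group

lemma cayley_dist_eq (S : Set G) (hgen : Subgroup.closure S = ⊤) (g h : G) :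
    (cayley S).dist g h = wordLength S (h * g⁻¹) := by
  obtain ⟨w, hw, hlen, hprod⟩ := wordLength_spec S hgen (h * g⁻¹)
  obtain ⟨p, hp⟩ := walk_of_word S w hw g h (by rw [hprod]; group)
  have h1 : (cayley S).dist g h ≤ wordLength S (h * g⁻¹) :=
    le_trans (SimpleGraph.dist_le p) (by rw [← hlen]; exact hp)
  obtain ⟨q, hq⟩ := SimpleGraph.Reachable.exists_walk_length_eq_dist ⟨p⟩
  obtain ⟨w', hw', hlen', hprod'⟩ := word_of_walk S q
  have h2 : wordLength S (h * g⁻¹) ≤ (cayley S).dist g h := by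
    rw [← hq, ← hlen']; exact wordLength_le S hw' hprod'
  omega
/-- Characterization of the tangent edges attached to the cone `C(sg)`:
for `h ∈ C(sg)`, `k ∉ C(sg)` with `{h,k}` an edge of the Cayley graph, the edge `{h,k}` is
tangent (i.e. it is an edge of the extended cone `C̄(sg)`) iff exactly one of the two cases
holds: (1) `{h,k}` is a tangent edge of `C̄(g)` with `k ∉ C(g)`, or (2) `{hg⁻¹,kg⁻¹}` is a
tangent edge of `C̄(s)` with `kg⁻¹ ∉ C(s)` but `k ∈ C(g)`. -/
theorem tangent_edge_characterization (S : Set G) (hS : S.Finite)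
    (hgen : Subgroup.closure S = ⊤)
    (g s : G) (hs : s ∈ S ∪ S⁻¹) (hlen : wordLength S (s * g) = wordLength S g + 1)
    (h k : G) (hh : h ∈ coneSet S (s * g)) (hk : k ∉ coneSet S (s * g))
    (hadj : (cayley S).Adj h k) :
    wordLength S h = wordLength S k ↔
      Xor'
        ((extConeSubgraph S g).Adj h k ∧ wordLength S h = wordLength S k ∧
          k ∉ coneSet S g)
        ((extConeSubgraph S s).Adj (h * g⁻¹) (k * g⁻¹) ∧
          wordLength S (h * g⁻¹) = wordLength S (k * g⁻¹) ∧
          k * g⁻¹ ∉ coneSet S s ∧ k ∈ coneSet S g) := by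
  have mem_cone : ∀ a b : G, a ∈ coneSet S b ↔
      wordLength S a = wordLength S b + wordLength S (a * b⁻¹) := fun a b => by
    simp only [coneSet, Set.mem_setOf_eq, cayley_dist_eq S hgen]
  have hs_le : wordLength S s ≤ 1 := wordLength_le S (w := [s]) (by simpa using hs) (by simp)
  have hs_ge : 1 ≤ wordLength S s := by
    have := wordLength_mul_le S hgen s g
    rw [hlen] at this; omega
  have hs1 : wordLength S s = 1 := le_antisymm hs_le hs_ge
  rw [mem_cone, hlen] at hh hk
  have eh : h * (s * g)⁻¹ = h * g⁻¹ * s⁻¹ := by group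
  have ek : k * (s * g)⁻¹ = k * g⁻¹ * s⁻¹ := by group
  rw [eh] at hh; rw [ek] at hk
  have A1 : wordLength S (h * g⁻¹) ≤ wordLength S (h * g⁻¹ * s⁻¹) + 1 := by
    have h1 := wordLength_mul_le S hgen (h * g⁻¹ * s⁻¹) s
    rw [hs1] at h1
    have e : h * g⁻¹ * s⁻¹ * s = h * g⁻¹ := by group
    rwa [e] at h1
  have A2 : wordLength S h ≤ wordLength S g + wordLength S (h * g⁻¹) := by
    have h1 := wordLength_mul_le S hgen (h * g⁻¹) g
    have e : h * g⁻¹ * g = h := by group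
    rw [e] at h1; omega
  have B1 : wordLength S (k * g⁻¹) ≤ wordLength S (k * g⁻¹ * s⁻¹) + 1 := by
    have h1 := wordLength_mul_le S hgen (k * g⁻¹ * s⁻¹) s
    rw [hs1] at h1
    have e : k * g⁻¹ * s⁻¹ * s = k * g⁻¹ := by group
    rwa [e] at h1
  have B2 : wordLength S k ≤ wordLength S g + wordLength S (k * g⁻¹) := by
    have h1 := wordLength_mul_le S hgen (k * g⁻¹) g
    have e : k * g⁻¹ * g = k := by group
    rw [e] at h1; omega
  have hCg : wordLength S h = wordLength S g + wordLength S (h * g⁻¹) := by omega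
  have heq2 : wordLength S (h * g⁻¹) = 1 + wordLength S (h * g⁻¹ * s⁻¹) := by omega
  have hhCs : h * g⁻¹ ∈ coneSet S s := by
    rw [mem_cone, hs1]; omega
  constructor
  · intro ht
    by_cases hkCg : k ∈ coneSet S g
    · right
      have hkCg' := (mem_cone k g).mp hkCg
      have htr : wordLength S (h * g⁻¹) = wordLength S (k * g⁻¹) := by omega
      have hkCs : k * g⁻¹ ∉ coneSet S s := by
        rw [mem_cone, hs1]
        intro hc
        exact hk (by omega)
      refine ⟨⟨⟨(show _ ≠ _ ∧ _ from ⟨?_, ?_⟩), Or.inr ⟨htr, Or.inl hhCs⟩⟩, htr, hkCs, hkCg⟩, fun hA => hA.2.2 hkCg⟩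
      · intro e
        exact hadj.ne (mul_right_cancel e)
      · have e : (k * g⁻¹) * (h * g⁻¹)⁻¹ = k * h⁻¹ := by group
        rw [e]; exact (show h ≠ k ∧ k * h⁻¹ ∈ S ∪ S⁻¹ from hadj).2
    · left
      exact ⟨⟨⟨hadj, Or.inr ⟨ht, Or.inl ((mem_cone h g).mpr hCg)⟩⟩, ht, hkCg⟩,
        fun hB => hkCg hB.2.2.2⟩
  · rintro (⟨⟨_, hteq, _⟩, _⟩ | ⟨⟨_, htr, _, hkCg⟩, _⟩)
    · exact hteq
    · rw [mem_cone] at hkCg; omega
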